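/- Minimal N for a Young diagram pair: Let ρ be a nonempty Young diagram with c = cols(ρ) columns, let σ be any Young diagram with d = cols(σ) columns, and let N be a natural number. Then the sequence (N − ρ'_c, N − ρ'_{c−1}, …, N − ρ'_1, σ'_1, …, σ'_d) is a non-increasing sequence of non-negative integers — equivalently, Φ_N(ρ,σ) is a well-defined Young diagram — if and only if N ≥ rows(ρ) + rows(σ), i.e., if and only if N is at least the total number of rows of the Young diagram pair (ρ̄, σ). -/

import Mathlib

open YoungDiagram

/-- **Minimal `N` for a Young diagram pair**: for a nonempty Young diagram `ρ` with
`c = cols ρ` columns, any Young diagram `σ` with `d = cols σ` columns, and any `N : ℕ`,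
the integer sequence `(N - ρ'_c, …, N - ρ'_1, σ'_1, …, σ'_d)` is a non-increasing
sequence of non-negative integers — i.e. `Φ_N(ρ,σ)` is a well-defined Young diagram —
if and only if `N ≥ rows ρ + rows σ` (columns are indexed from `0` here, so the paper's
`ρ'_k` is `ρ.colLen (k-1)`). -/
theorem pair_min_N (ρ σ : YoungDiagram) (hρ : ρ.cells.Nonempty) (N : ℕ) :
    (((List.range (ρ.rowLen 0)).map
          (fun k => (N : ℤ) - (ρ.colLen (ρ.rowLen 0 - 1 - k) : ℤ))
        ++ (List.range (σ.rowLen 0)).map (fun j => (σ.colLen j : ℤ))).Pairwise (· ≥ ·)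
      ∧ ∀ x ∈ ((List.range (ρ.rowLen 0)).map
          (fun k => (N : ℤ) - (ρ.colLen (ρ.rowLen 0 - 1 - k) : ℤ))
        ++ (List.range (σ.rowLen 0)).map (fun j => (σ.colLen j : ℤ))), 0 ≤ x)
    ↔ ρ.colLen 0 + σ.colLen 0 ≤ N := by
  set c := ρ.rowLen 0 with hc
  set d := σ.rowLen 0 with hd
  have hc0 : 0 < c := by
    obtain ⟨⟨i, j⟩, hij⟩ := hρ
    have h00 : (0, 0) ∈ ρ := ρ.up_left_mem (Nat.zero_le i) (Nat.zero_le j) hij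
    rwa [YoungDiagram.mem_iff_lt_rowLen] at h00
  constructor
  · rintro ⟨hs, hn⟩
    have hA : ((N : ℤ) - (ρ.colLen (c - 1 - (c - 1)) : ℤ)) ∈
        ((List.range c).map (fun k => (N : ℤ) - (ρ.colLen (c - 1 - k) : ℤ))
          ++ (List.range d).map (fun j => (σ.colLen j : ℤ))) := by
      apply List.mem_append_left
      exact List.mem_map.mpr ⟨c - 1, List.mem_range.mpr (by omega), rfl⟩
    rcases Nat.eq_zero_or_pos d with hd0 | hd0
    · have hσ0 : σ.colLen 0 = 0 := by
        by_contra h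
        have : (0, 0) ∈ σ := YoungDiagram.mem_iff_lt_colLen.mpr (by omega)
        rw [YoungDiagram.mem_iff_lt_rowLen] at this
        omega
      have := hn _ hA
      simp only [Nat.sub_self] at this
      omega
    · have hs' := List.pairwise_append.mp hs
      have := hs'.2.2 _ (List.mem_map.mpr ⟨c - 1, List.mem_range.mpr (by omega), rfl⟩)
        ((σ.colLen 0 : ℤ)) (List.mem_map.mpr ⟨0, List.mem_range.mpr hd0, rfl⟩)
      simp only [Nat.sub_self] at this
      omega
  · intro h
    have hρa : ∀ k, ρ.colLen k ≤ ρ.colLen 0 := fun k => ρ.colLen_anti 0 k (Nat.zero_le k)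
    have hσa : ∀ j, σ.colLen j ≤ σ.colLen 0 := fun j => σ.colLen_anti 0 j (Nat.zero_le j)
    constructor
    · refine List.pairwise_append.mpr ⟨?_, ?_, ?_⟩
      · refine List.pairwise_map.mpr (List.Pairwise.imp_of_mem ?_ (List.pairwise_lt_range (n := c)))
        intro a b _ _ hab
        have h1 : ρ.colLen (c - 1 - a) ≤ ρ.colLen (c - 1 - b) :=
          ρ.colLen_anti _ _ (by omega)
        simp only [ge_iff_le]
        omega
      · refine List.pairwise_map.mpr (List.Pairwise.imp_of_mem ?_ (List.pairwise_lt_range (n := d)))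
        intro a b _ _ hab
        have h1 : σ.colLen b ≤ σ.colLen a := σ.colLen_anti _ _ (by omega)
        simp only [ge_iff_le]
        omega
      · intro x hx y hy
        simp only [List.mem_map, List.mem_range] at hx hy
        obtain ⟨k, hk, rfl⟩ := hx
        obtain ⟨j, hj, rfl⟩ := hy
        have h1 := hρa (c - 1 - k)
        have h2 := hσa j
        simp only [ge_iff_le]
        omega
    · intro x hx
      simp only [List.mem_append, List.mem_map, List.mem_range] at hx
      rcases hx with ⟨k, hk, rfl⟩ | ⟨j, hj, rfl⟩
      · have h1 := hρa (c - 1 - k)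
        omega
      · positivity
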